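/- arXiv:2010.16130 — 5 statements merged into one kernel-verified Lean document; each statement's English description precedes it below -/
import Mathlib

section
/- Let b ∈ ℝ^N and suppose 𝒪_N(C,A)·b ≠ 0, i.e. C·A^j·b ≠ 0 for some j ∈ {0,…,N−1}. Then there exists δ ∈ (0,T) such that ∫_δ^T C·exp((T−s)A)·b ds ≠ 0. -/
open Matrix NormedSpace

section Aux

variable {N P : ℕ}

/-- `M ↦ (D * M) *ᵥ b` as a continuous linear map, under the linfty operator norm. -/
noncomputable def matVecCLM (D : Matrix (Fin P) (Fin N) ℝ) (b : Fin N → ℝ) :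
    letI := Matrix.linftyOpNormedAddCommGroup (α := ℝ) (m := Fin N) (n := Fin N)
    letI := Matrix.linftyOpNormedSpace (R := ℝ) (α := ℝ) (m := Fin N) (n := Fin N)
    Matrix (Fin N) (Fin N) ℝ →L[ℝ] (Fin P → ℝ) :=
  letI := Matrix.linftyOpNormedAddCommGroup (α := ℝ) (m := Fin N) (n := Fin N)
  letI := Matrix.linftyOpNormedSpace (R := ℝ) (α := ℝ) (m := Fin N) (n := Fin N)
  LinearMap.toContinuousLinearMap
  { toFun := fun M => (D * M).mulVec b
    map_add' := fun M M' => by simp [Matrix.mul_add, Matrix.add_mulVec]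
    map_smul' := fun c M => by
      simp [Matrix.mul_smul, Matrix.smul_mulVec] }

lemma gderiv (A : Matrix (Fin N) (Fin N) ℝ) (D : Matrix (Fin P) (Fin N) ℝ)
    (b : Fin N → ℝ) (u : ℝ) :
    HasDerivAt (fun t : ℝ => (D * exp (t • A)).mulVec b)
      ((D * A * exp (u • A)).mulVec b) u := by
  letI := Matrix.linftyOpNormedRing (α := ℝ) (n := Fin N)
  letI := Matrix.linftyOpNormedAlgebra (R := ℝ) (α := ℝ) (n := Fin N)
  have h := hasDerivAt_exp_smul_const' (𝕂 := ℝ) A u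
  have h2 := ((matVecCLM D b).hasFDerivAt.comp_hasDerivAt u h)
  rw [Matrix.mul_assoc]; exact h2

lemma gcont (A : Matrix (Fin N) (Fin N) ℝ) (C : Matrix (Fin P) (Fin N) ℝ)
    (b : Fin N → ℝ) :
    Continuous (fun t : ℝ => (C * exp (t • A)).mulVec b) := by
  letI := Matrix.linftyOpNormedRing (α := ℝ) (n := Fin N)
  letI := Matrix.linftyOpNormedAlgebra (R := ℝ) (α := ℝ) (n := Fin N)
  exact (matVecCLM C b).continuous.comp
    ((continuous_iff_continuousAt.2 fun x => (exp_analytic (𝕂 := ℝ) x).continuousAt).comp (continuous_id.smul continuous_const))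

lemma ganalytic (A : Matrix (Fin N) (Fin N) ℝ) (C : Matrix (Fin P) (Fin N) ℝ)
    (b : Fin N → ℝ) (u : ℝ) :
    AnalyticAt ℝ (fun t : ℝ => (C * exp (t • A)).mulVec b) u := by
  letI := Matrix.linftyOpNormedRing (α := ℝ) (n := Fin N)
  letI := Matrix.linftyOpNormedAlgebra (R := ℝ) (α := ℝ) (n := Fin N)
  have h1 : AnalyticAt ℝ (fun t : ℝ => t • A) u :=
    (analyticAt_id).smul analyticAt_const
  have h2 : AnalyticAt ℝ (fun t : ℝ => exp (t • A)) u := by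
    exact AnalyticAt.comp (exp_analytic (u • A)) h1
  exact ((matVecCLM C b).analyticAt _).comp h2

lemma exp_zero_case (A : Matrix (Fin N) (Fin N) ℝ) (C : Matrix (Fin P) (Fin N) ℝ)
    (b : Fin N → ℝ)
    (hg : ∀ u : ℝ, (C * exp (u • A)).mulVec b = 0) :
    ∀ j : ℕ, (C * A ^ j).mulVec b = 0 := by
  have key : ∀ j : ℕ, ∀ u : ℝ, ((C * A ^ j) * exp (u • A)).mulVec b = 0 := by
    intro j
    induction j with
    | zero => intro u; simpa using hg u
    | succ j ih =>
      intro u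
      have h1 := gderiv A (C * A ^ j) b u
      have h2 : HasDerivAt (fun t : ℝ => ((C * A ^ j) * exp (t • A)).mulVec b)
          (0 : Fin P → ℝ) u := by
        have : (fun t : ℝ => ((C * A ^ j) * exp (t • A)).mulVec b)
            = fun _ => (0 : Fin P → ℝ) := funext ih
        rw [this]; exact hasDerivAt_const _ _
      have := h1.unique h2
      rw [pow_succ, ← Matrix.mul_assoc]
      exact this
  intro j
  have := key j 0
  simpa using this

end Aux

/-- The observability matrix `𝒪_N(C,A)`, the block-column stacking of `C A^j`,
`j = 0,…,N−1`, indexed so that the row `(j,p)` is the `p`-th row of `C A^j`. -/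
def obsMat {N P : ℕ} (A : Matrix (Fin N) (Fin N) ℝ) (C : Matrix (Fin P) (Fin N) ℝ) :
    Matrix (Fin N × Fin P) (Fin N) ℝ :=
  Matrix.of fun jp i => (C * A ^ (jp.1 : ℕ)) jp.2 i

/-- if `𝒪_N(C,A) b ≠ 0` then there is `δ ∈ (0,T)` with
`∫_δ^T C e^{(T−s)A} b ds ≠ 0`. -/
theorem exists_delta_integral_ne_zero {N P : ℕ} (hN : 0 < N) (hP : 0 < P)
    (T : ℝ) (hT : 0 < T)
    (A : Matrix (Fin N) (Fin N) ℝ) (C : Matrix (Fin P) (Fin N) ℝ)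
    (b : Fin N → ℝ) (hb : (obsMat A C).mulVec b ≠ 0) :
    ∃ δ ∈ Set.Ioo (0:ℝ) T,
      (∫ s in δ..T, (C * NormedSpace.exp ((T - s) • A)).mulVec b) ≠ 0 := by
  by_contra hcon
  push_neg at hcon
  set f : ℝ → (Fin P → ℝ) := fun s => (C * exp ((T - s) • A)).mulVec b with hf
  have fcont : Continuous f := (gcont A C b).comp (continuous_const.sub continuous_id)
  have fzero : ∀ δ ∈ Set.Ioo (0:ℝ) T, f δ = 0 := by
    intro δ hδ
    have hInt : IntervalIntegrable f MeasureTheory.volume δ T :=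
      fcont.intervalIntegrable _ _
    have hD : HasDerivAt (fun u => ∫ s in u..T, f s) (-f δ) δ :=
      intervalIntegral.integral_hasDerivAt_left hInt
        (fcont.stronglyMeasurableAtFilter _ _) fcont.continuousAt
    have hev : (fun u => ∫ s in u..T, f s) =ᶠ[nhds δ] (fun _ => (0 : Fin P → ℝ)) := by
      filter_upwards [isOpen_Ioo.mem_nhds hδ] with x hx
      exact hcon x hx
    have hD0 : HasDerivAt (fun u => ∫ s in u..T, f s) (0 : Fin P → ℝ) δ :=
      (hasDerivAt_const δ (0 : Fin P → ℝ)).congr_of_eventuallyEq hev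
    have := hD.unique hD0
    exact neg_eq_zero.mp this
  have gzero : ∀ u : ℝ, (C * exp (u • A)).mulVec b = 0 := by
    have hA : AnalyticOnNhd ℝ (fun u : ℝ => (C * exp (u • A)).mulVec b) Set.univ :=
      fun x _ => ganalytic A C b x
    have hf0 : (fun u : ℝ => (C * exp (u • A)).mulVec b) =ᶠ[nhds (T/2)] 0 := by
      filter_upwards [isOpen_Ioo.mem_nhds ⟨half_pos hT, half_lt_self hT⟩] with x hx
      have hx' : T - x ∈ Set.Ioo (0:ℝ) T := ⟨by linarith [hx.2], by linarith [hx.1]⟩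
      have := fzero (T - x) hx'
      simpa [hf, sub_sub_cancel] using this
    have := hA.eqOn_zero_of_preconnected_of_eventuallyEq_zero isPreconnected_univ
      (Set.mem_univ (T/2)) hf0
    intro u; exact this (Set.mem_univ u)
  have hpow := exp_zero_case A C b gzero
  apply hb
  funext jp
  have := congrFun (hpow jp.1) jp.2
  simpa [obsMat, Matrix.mulVec, dotProduct] using this
end

section
/- Let B̃ ∈ ℝ^{N×M} satisfy 𝒪_N(C,A)·B̃ ≠ 0. Then there exists a control ε ∈ L²((0,T);ℝ^M) with γ(B̃,ε) ≠ 0; moreover ε can be chosen of the form ε(s) = 0 for s ∈ [0,δ) and ε(s) = e_i for s ∈ [δ,T], for some δ ∈ (0,T) and some canonical basis vector e_i of ℝ^M. In particular, if rank 𝒪_N(C,A) = N, then every nonzero B̃ ∈ ℝ^{N×M} admits such a discriminating control. -/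
open MeasureTheory Matrix

/-- Observation integral `γ(B,ε) = ∫_0^T C e^{(T-s)A} B ε(s) ds`. -/
noncomputable def gam {N M P : ℕ} (T : ℝ) (A : Matrix (Fin N) (Fin N) ℝ)
    (C : Matrix (Fin P) (Fin N) ℝ) (B : Matrix (Fin N) (Fin M) ℝ)
    (ε : ℝ → Fin M → ℝ) : Fin P → ℝ :=
  ∫ s in (0:ℝ)..T, (C * NormedSpace.exp ((T - s) • A) * B).mulVec (ε s)

/-- The step control: `ε(s) = 0` for `s < δ` and `ε(s) = e_i` for `s ≥ δ`. -/
noncomputable def stepControl {M : ℕ} (δ : ℝ) (i : Fin M) : ℝ → Fin M → ℝ :=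
  fun s => if s < δ then 0 else Pi.single i 1

section Aux

attribute [local instance] Matrix.linftyOpNormedAddCommGroup Matrix.linftyOpNormedRing
  Matrix.linftyOpNormedAlgebra Matrix.linftyOpNormedSpace

private lemma key_discriminating {N M P : ℕ} (T : ℝ) (hT : 0 < T)
    (A : Matrix (Fin N) (Fin N) ℝ) (C : Matrix (Fin P) (Fin N) ℝ)
    (Bt : Matrix (Fin N) (Fin M) ℝ) (hBt : obsMat A C * Bt ≠ 0) :
    ∃ δ ∈ Set.Ioo (0:ℝ) T, ∃ i : Fin M, gam T A C Bt (stepControl δ i) ≠ 0 := by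
  by_contra hcon
  push_neg at hcon
  have hexpc : Continuous (fun s : ℝ => NormedSpace.exp ((T - s) • A)) :=
    NormedSpace.exp_continuous.comp (by fun_prop)
  set f : Fin M → ℝ → (Fin P → ℝ) :=
    fun i s => (C * NormedSpace.exp ((T - s) • A) * Bt).mulVec (Pi.single i 1) with hf_def
  have hfc : ∀ i, Continuous (f i) := fun i =>
    ((continuous_const.matrix_mul hexpc).matrix_mul continuous_const).matrix_mulVec
      continuous_const
  -- `gam` with the step control is a tail integral of `f i`
  have hgam : ∀ δ ∈ Set.Ioo (0:ℝ) T, ∀ i,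
      gam T A C Bt (stepControl δ i) = ∫ s in δ..T, f i s := by
    intro δ hδ i
    have hδT : δ ≤ T := hδ.2.le
    have h0δ : (0:ℝ) ≤ δ := hδ.1.le
    unfold gam stepControl
    have hg : ∀ s, (C * NormedSpace.exp ((T - s) • A) * Bt).mulVec
        (if s < δ then 0 else Pi.single i 1)
        = if s < δ then 0 else f i s := by
      intro s; split <;> simp [hf_def]
    simp_rw [hg]
    have h2 : IntervalIntegrable (fun s => if s < δ then (0 : Fin P → ℝ) else f i s)
        volume δ T := by
      apply ContinuousOn.intervalIntegrable
      apply ((hfc i).continuousOn).congr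
      intro s hs
      rw [Set.uIcc_of_le hδT] at hs
      simp [not_lt.2 hs.1]
    have hne0 : ∀ᵐ s : ℝ, s ≠ δ := by
      rw [ae_iff]
      simp only [not_ne_iff, Set.setOf_eq_eq_singleton]
      exact Real.volume_singleton
    have h1 : IntervalIntegrable (fun s => if s < δ then (0 : Fin P → ℝ) else f i s)
        volume 0 δ := by
      apply (intervalIntegrable_const (c := (0 : Fin P → ℝ))).congr_ae
      filter_upwards [ae_restrict_of_ae hne0,
        ae_restrict_mem measurableSet_uIoc] with s hs hmem
      rw [Set.uIoc_of_le h0δ] at hmem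
      simp [lt_of_le_of_ne hmem.2 hs]
    rw [← intervalIntegral.integral_add_adjacent_intervals h1 h2]
    have hz : (∫ s in (0:ℝ)..δ, if s < δ then (0 : Fin P → ℝ) else f i s) = 0 := by
      rw [intervalIntegral.integral_congr_ae (g := fun _ => (0 : Fin P → ℝ)) ?_]
      · simp
      · filter_upwards [hne0] with s hs hmem
        rw [Set.uIoc_of_le h0δ] at hmem
        simp [lt_of_le_of_ne hmem.2 hs]
    rw [hz, zero_add]
    apply intervalIntegral.integral_congr
    intro s hs
    rw [Set.uIcc_of_le hδT] at hs
    simp [not_lt.2 hs.1]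
  -- hence `f i = 0` on `(0,T)`
  have hfzero : ∀ i, ∀ δ ∈ Set.Ioo (0:ℝ) T, f i δ = 0 := by
    intro i δ hδ
    have hF : ∀ u ∈ Set.Ioo (0:ℝ) T, (∫ s in u..T, f i s) = 0 := fun u hu => by
      rw [← hgam u hu i]; exact hcon u hu i
    have hder : HasDerivAt (fun u => ∫ s in u..T, f i s) (-(f i δ)) δ :=
      intervalIntegral.integral_hasDerivAt_left ((hfc i).intervalIntegrable _ _)
        ((hfc i).stronglyMeasurable.stronglyMeasurableAtFilter)
        ((hfc i).continuousAt)
    have hder0 : HasDerivAt (fun u => ∫ s in u..T, f i s) 0 δ := by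
      refine (hasDerivAt_const δ (0 : Fin P → ℝ)).congr_of_eventuallyEq ?_
      filter_upwards [isOpen_Ioo.mem_nhds hδ] with u hu
      exact hF u hu
    have h := hder.unique hder0
    have : f i δ = 0 := by
      have := congrArg Neg.neg h
      simpa using this
    exact this
  -- hence the matrix `C e^{tA} Bt` vanishes on `(0,T)`
  have hmat : ∀ t ∈ Set.Ioo (0:ℝ) T, C * NormedSpace.exp (t • A) * Bt = 0 := by
    intro t ht
    have hδ : T - t ∈ Set.Ioo (0:ℝ) T := ⟨by linarith [ht.2], by linarith [ht.1]⟩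
    ext p i
    have h := congrFun (hfzero i (T - t) hδ) p
    simp only [hf_def] at h
    rw [show T - (T - t) = t by ring] at h
    simpa using h
  -- by induction (differentiating), all `C e^{tA} A^k Bt` vanish on `(0,T)`
  have hclaim : ∀ k : ℕ, ∀ t ∈ Set.Ioo (0:ℝ) T,
      C * NormedSpace.exp (t • A) * (A ^ k * Bt) = 0 := by
    intro k
    induction k with
    | zero => intro t ht; simpa [pow_zero, one_mul] using hmat t ht
    | succ k ih =>
      intro t ht
      let Lc : Matrix (Fin N) (Fin N) ℝ →L[ℝ] Matrix (Fin P) (Fin M) ℝ :=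
        LinearMap.toContinuousLinearMap
          { toFun := fun Y => C * Y * (A ^ k * Bt)
            map_add' := by intro a b; simp [Matrix.mul_add, Matrix.add_mul]
            map_smul' := by intro c a; simp [Matrix.mul_smul, Matrix.smul_mul] }
      have hLc : ∀ Y, Lc Y = C * Y * (A ^ k * Bt) := fun _ => rfl
      have h1 : HasDerivAt (fun u : ℝ => Lc (NormedSpace.exp (u • A)))
          (Lc (NormedSpace.exp (t • A) * A)) t :=
        Lc.hasFDerivAt.comp_hasDerivAt t (hasDerivAt_exp_smul_const A t)
      have h0 : HasDerivAt (fun u : ℝ => Lc (NormedSpace.exp (u • A))) 0 t := by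
        refine (hasDerivAt_const t (0 : Matrix (Fin P) (Fin M) ℝ)).congr_of_eventuallyEq ?_
        filter_upwards [isOpen_Ioo.mem_nhds ht] with u hu
        rw [hLc]
        exact ih u hu
      have h2 : Lc (NormedSpace.exp (t • A) * A) = 0 := h1.unique h0
      rw [hLc] at h2
      rw [show C * (NormedSpace.exp (t • A) * A) * (A ^ k * Bt)
          = C * NormedSpace.exp (t • A) * (A ^ (k + 1) * Bt) by
        rw [pow_succ']; simp only [Matrix.mul_assoc]] at h2
      exact h2
  -- take the limit `t → 0⁺`
  have hCk : ∀ k : ℕ, C * A ^ k * Bt = 0 := by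
    intro k
    have hcont : Continuous (fun t : ℝ =>
        C * NormedSpace.exp (t • A) * (A ^ k * Bt)) :=
      (continuous_const.matrix_mul
        (NormedSpace.exp_continuous.comp (by fun_prop))).matrix_mul continuous_const
    have hclosed : closure (Set.Ioo (0:ℝ) T) ⊆
        {t : ℝ | C * NormedSpace.exp (t • A) * (A ^ k * Bt) = 0} :=
      closure_minimal (fun t ht => hclaim k t ht) (isClosed_eq hcont continuous_const)
    have h0mem : (0:ℝ) ∈ closure (Set.Ioo (0:ℝ) T) := by
      rw [closure_Ioo hT.ne]; exact ⟨le_refl _, hT.le⟩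
    have h := hclosed h0mem
    simp only [Set.mem_setOf_eq, zero_smul, NormedSpace.exp_zero, Matrix.mul_one] at h
    rw [Matrix.mul_assoc]
    exact h
  -- contradiction with `obsMat A C * Bt ≠ 0`
  apply hBt
  ext jp i
  obtain ⟨j, p⟩ := jp
  have h := congrFun (congrFun (hCk (j : ℕ)) p) i
  simpa [obsMat, Matrix.mul_apply] using h

end Aux

/-- if `𝒪_N(C,A) B̃ ≠ 0` then some step control (hence some `L²` control)
discriminates `B̃`, i.e. `γ(B̃,ε) ≠ 0`; in particular, if `rank 𝒪_N(C,A) = N`, every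
nonzero `B̃` admits such a discriminating control. -/
theorem exists_discriminating_control {N M P : ℕ} (hN : 0 < N) (hM : 0 < M) (hP : 0 < P)
    (T : ℝ) (hT : 0 < T)
    (A : Matrix (Fin N) (Fin N) ℝ) (C : Matrix (Fin P) (Fin N) ℝ)
    (Bt : Matrix (Fin N) (Fin M) ℝ) (hBt : obsMat A C * Bt ≠ 0) :
    (∃ δ ∈ Set.Ioo (0:ℝ) T, ∃ i : Fin M, gam T A C Bt (stepControl δ i) ≠ 0) ∧
      ((obsMat A C).rank = N →
        ∀ B' : Matrix (Fin N) (Fin M) ℝ, B' ≠ 0 →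
          ∃ δ ∈ Set.Ioo (0:ℝ) T, ∃ i : Fin M, gam T A C B' (stepControl δ i) ≠ 0) := by
  refine ⟨key_discriminating T hT A C Bt hBt, fun hrank B' hB' => ?_⟩
  apply key_discriminating T hT A C B'
  intro h0
  apply hB'
  -- `mulVecLin` of the observability matrix is injective
  have hker : LinearMap.ker (obsMat A C).mulVecLin = ⊥ := by
    have h1 := LinearMap.finrank_range_add_finrank_ker (obsMat A C).mulVecLin
    unfold Matrix.rank at hrank
    rw [hrank, Module.finrank_pi] at h1
    simp only [Fintype.card_fin] at h1
    have h2 : Module.finrank ℝ (LinearMap.ker (obsMat A C).mulVecLin) = 0 := by omega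
    exact Submodule.finrank_eq_zero.mp h2
  have hinj : Function.Injective (obsMat A C).mulVecLin := LinearMap.ker_eq_bot.mp hker
  have hcols : ∀ i : Fin M, (fun l => B' l i) = (0 : Fin N → ℝ) := by
    intro i
    apply hinj
    rw [map_zero]
    ext jp
    have h := congrFun (congrFun h0 jp) i
    simpa [Matrix.mulVecLin_apply, Matrix.mulVec, Matrix.mul_apply, dotProduct] using h
  ext l i
  exact congrFun (hcols i) l
end

section
/- Assume rank 𝒪_N(C,A) = N and let B_1,…,B_K ∈ ℝ^{N×M} be linearly independent (1 ≤ K ≤ MN). Then there exist controls ε^1,…,ε^K ∈ L²((0,T);ℝ^M) such that the matrix Ŵ := Σ_{m=1}^K W(ε^m) ∈ ℝ^{K×K} is positive definite; consequently, for any α⋆ ∈ ℝ^K, the vector α = α⋆ is the unique global minimizer of α ↦ Σ_{m=1}^K ‖C·φ_T(B(α⋆),ε^m) − C·φ_T(B(α),ε^m)‖₂². -/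
open MeasureTheory Matrix

/-- Final state `φ_T(B,ε) = e^{TA} φ₀ + ∫_0^T e^{(T-s)A} B ε(s) ds`. -/
noncomputable def phiT {N M : ℕ} (T : ℝ) (A : Matrix (Fin N) (Fin N) ℝ)
    (φ₀ : Fin N → ℝ) (B : Matrix (Fin N) (Fin M) ℝ) (ε : ℝ → Fin M → ℝ) : Fin N → ℝ :=
  (NormedSpace.exp (T • A)).mulVec φ₀ +
    ∫ s in (0:ℝ)..T, (NormedSpace.exp ((T - s) • A) * B).mulVec (ε s)

/-- The matrix `W(ε)` with entries `⟨γ(B_ℓ,ε), γ(B_j,ε)⟩`. -/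
noncomputable def Wmat {N M P K : ℕ} (T : ℝ) (A : Matrix (Fin N) (Fin N) ℝ)
    (C : Matrix (Fin P) (Fin N) ℝ) (Bs : Fin K → Matrix (Fin N) (Fin M) ℝ)
    (ε : ℝ → Fin M → ℝ) : Matrix (Fin K) (Fin K) ℝ :=
  Matrix.of fun ℓ j => gam T A C (Bs ℓ) ε ⬝ᵥ gam T A C (Bs j) ε

open NormedSpace

section aux
variable {N M P K : ℕ}

lemma contEntry {N : ℕ} (A : Matrix (Fin N) (Fin N) ℝ) (i j : Fin N) :
    Continuous fun u : ℝ => exp (u • A) i j := by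
  letI : SeminormedRing (Matrix (Fin N) (Fin N) ℝ) := Matrix.linftyOpSemiNormedRing
  letI : NormedRing (Matrix (Fin N) (Fin N) ℝ) := Matrix.linftyOpNormedRing
  letI : NormedAlgebra ℝ (Matrix (Fin N) (Fin N) ℝ) := Matrix.linftyOpNormedAlgebra
  have h : Continuous fun u : ℝ => exp (u • A) := by
    rw [continuous_iff_continuousAt]
    exact fun t => (hasDerivAt_exp_smul_const A t).continuousAt
  exact ((Matrix.entryLinearMap ℝ ℝ i j).continuous_of_finiteDimensional).comp h

lemma stepLemma {N Q R : ℕ} {T : ℝ} (A : Matrix (Fin N) (Fin N) ℝ)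
    (Y : Matrix (Fin Q) (Fin N) ℝ) (B : Matrix (Fin N) (Fin R) ℝ)
    (h : ∀ s ∈ Set.Ioo (0:ℝ) T, Y * exp ((T - s) • A) * B = 0) :
    ∀ s ∈ Set.Ioo (0:ℝ) T, (Y * A) * exp ((T - s) • A) * B = 0 := by
  letI : SeminormedRing (Matrix (Fin N) (Fin N) ℝ) := Matrix.linftyOpSemiNormedRing
  letI : NormedRing (Matrix (Fin N) (Fin N) ℝ) := Matrix.linftyOpNormedRing
  letI : NormedAlgebra ℝ (Matrix (Fin N) (Fin N) ℝ) := Matrix.linftyOpNormedAlgebra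
  intro s hs
  -- derivative of u ↦ exp((T-u)•A) at s
  have hexp : HasDerivAt (fun u : ℝ => exp ((T - u) • A))
      (-(exp ((T - s) • A) * A)) s := by
    have h1 : HasDerivAt (fun u : ℝ => T - u) (-1) s := by
      simpa using (hasDerivAt_id s).const_sub T
    have h2 := hasDerivAt_exp_smul_const A (T - s)
    have h3 := h2.scomp s h1
    simp only [neg_one_smul, Function.comp_def] at h3
    exact h3
  letI : NormedAddCommGroup (Matrix (Fin Q) (Fin R) ℝ) := Matrix.linftyOpNormedAddCommGroup
  letI : NormedSpace ℝ (Matrix (Fin Q) (Fin R) ℝ) := Matrix.linftyOpNormedSpace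
  let Lmap : Matrix (Fin N) (Fin N) ℝ →ₗ[ℝ] Matrix (Fin Q) (Fin R) ℝ :=
  { toFun := fun X => Y * X * B
    map_add' := fun X₁ X₂ => by simp [Matrix.mul_add, Matrix.add_mul]
    map_smul' := fun c X => by simp [Matrix.mul_smul, Matrix.smul_mul] }
  have hF : HasDerivAt (fun u : ℝ => Y * exp ((T - u) • A) * B)
      (Y * -(exp ((T - s) • A) * A) * B) s :=
    (Lmap.toContinuousLinearMap.hasFDerivAt).comp_hasDerivAt s hexp
  have hzero : HasDerivAt (fun u : ℝ => Y * exp ((T - u) • A) * B) 0 s := by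
    have hev : (fun u : ℝ => Y * exp ((T - u) • A) * B) =ᶠ[nhds s] (fun _ => 0) := by
      filter_upwards [isOpen_Ioo.mem_nhds hs] with u hu using h u hu
    exact (hasDerivAt_const s (0 : Matrix (Fin Q) (Fin R) ℝ)).congr_of_eventuallyEq hev
  have huniq := hF.unique hzero
  have hcomm : exp ((T - s) • A) * A = A * exp ((T - s) • A) :=
    (((Commute.refl A).smul_right (T - s)).exp_right).symm.eq
  have h2 : Y * (exp ((T - s) • A) * A) * B = 0 := by
    rw [Matrix.mul_neg, Matrix.neg_mul, neg_eq_zero] at huniq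
    exact huniq
  rw [hcomm, ← Matrix.mul_assoc] at h2
  exact h2

lemma cont_gEntry (T : ℝ) (A : Matrix (Fin N) (Fin N) ℝ) (C : Matrix (Fin P) (Fin N) ℝ)
    (B : Matrix (Fin N) (Fin M) ℝ) (p : Fin P) (q : Fin M) :
    Continuous fun s : ℝ => (C * exp ((T - s) • A) * B) p q := by
  have hE : ∀ i j : Fin N, Continuous fun s : ℝ => exp ((T - s) • A) i j := fun i j =>
    (contEntry A i j).comp (continuous_const.sub continuous_id)
  simp only [Matrix.mul_apply]
  exact continuous_finset_sum _ fun j _ =>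
    (continuous_finset_sum _ fun i _ => continuous_const.mul (hE i j)).mul continuous_const

lemma cont_integrand (T : ℝ) (A : Matrix (Fin N) (Fin N) ℝ) (C : Matrix (Fin P) (Fin N) ℝ)
    (B : Matrix (Fin N) (Fin M) ℝ) {ε : ℝ → Fin M → ℝ} (hε : Continuous ε) :
    Continuous fun s : ℝ => (C * exp ((T - s) • A) * B).mulVec (ε s) := by
  apply continuous_pi; intro p
  simp only [Matrix.mulVec, dotProduct]
  exact continuous_finset_sum _ fun q _ =>
    (cont_gEntry T A C B p q).mul ((continuous_apply q).comp hε)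

lemma eqzero_of_integral_zero {f : ℝ → ℝ} (hc : Continuous f) (h0 : ∀ s, 0 ≤ f s)
    {T : ℝ} (hT : 0 < T) (hI : (∫ s in (0:ℝ)..T, f s) = 0) :
    ∀ s ∈ Set.Ioo (0:ℝ) T, f s = 0 := by
  intro s hs
  by_contra hne
  have hpos : 0 < f s := lt_of_le_of_ne (h0 s) (Ne.symm hne)
  have hlt : 0 < ∫ u in (0:ℝ)..T, f u := by
    rw [intervalIntegral.integral_pos_iff_support_of_nonneg_ae (ae_of_all _ h0)
      (hc.intervalIntegrable 0 T)]
    refine ⟨hT, ?_⟩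
    have hopen : IsOpen (f ⁻¹' Set.Ioi 0 ∩ Set.Ioo 0 T) :=
      (isOpen_Ioi.preimage hc).inter isOpen_Ioo
    have hsub : f ⁻¹' Set.Ioi 0 ∩ Set.Ioo 0 T ⊆ Function.support f ∩ Set.Ioc 0 T :=
      fun x hx => ⟨ne_of_gt hx.1, Set.Ioo_subset_Ioc_self hx.2⟩
    calc (0:ENNReal) < volume (f ⁻¹' Set.Ioi 0 ∩ Set.Ioo 0 T) :=
          hopen.measure_pos volume ⟨s, hpos, hs⟩
      _ ≤ _ := measure_mono hsub
  rw [hI] at hlt; exact lt_irrefl 0 hlt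


variable {T : ℝ} {A : Matrix (Fin N) (Fin N) ℝ} {C : Matrix (Fin P) (Fin N) ℝ}

lemma gam_apply (B : Matrix (Fin N) (Fin M) ℝ) {ε : ℝ → Fin M → ℝ} (hε : Continuous ε)
    (p : Fin P) :
    gam T A C B ε p =
      ∫ s in (0:ℝ)..T, ((C * exp ((T - s) • A) * B).mulVec (ε s)) p := by
  exact ((ContinuousLinearMap.proj (R := ℝ) (φ := fun _ : Fin P => ℝ) p
    ).intervalIntegral_comp_comm
      ((cont_integrand T A C B hε).intervalIntegrable 0 T)).symm

lemma keyInj (hT : 0 < T) (hrank : (obsMat A C).rank = N)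
    (B : Matrix (Fin N) (Fin M) ℝ)
    (h : ∀ ε : ℝ → Fin M → ℝ, Continuous ε → gam T A C B ε = 0) : B = 0 := by
  classical
  set E : ℝ → Matrix (Fin N) (Fin N) ℝ := fun s => exp ((T - s) • A) with hE
  -- Step 1: C * E s * B = 0 on Ioo 0 T
  have hzero : ∀ s ∈ Set.Ioo (0:ℝ) T, C * E s * B = 0 := by
    have key : ∀ (p : Fin P) (s : ℝ), s ∈ Set.Ioo (0:ℝ) T →
        (∑ q : Fin M, (C * E s * B) p q ^ 2) = 0 := by
      intro p
      set ε : ℝ → Fin M → ℝ := fun s => (C * E s * B)ᵀ.mulVec (Pi.single p 1) with hεdef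
      have hεc : Continuous ε := by
        apply continuous_pi; intro q
        simp only [hεdef, Matrix.mulVec, dotProduct, Matrix.transpose_apply]
        exact continuous_finset_sum _ fun k _ =>
          (cont_gEntry T A C B k q).mul continuous_const
      have hg : gam T A C B ε = 0 := h ε hεc
      have hcomp := gam_apply (T := T) (A := A) (C := C) B hεc p
      have heq : ∀ s : ℝ, ((C * exp ((T - s) • A) * B).mulVec (ε s)) p
          = ∑ q : Fin M, (C * E s * B) p q ^ 2 := by
        intro s
        simp only [hεdef, hE, Matrix.mulVec, dotProduct, Matrix.transpose_apply,
          Pi.single_apply, mul_ite, mul_one, mul_zero, Finset.sum_ite_eq', Finset.mem_univ,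
          if_true, sq]
      have hI : (∫ s in (0:ℝ)..T, ∑ q : Fin M, (C * E s * B) p q ^ 2) = 0 := by
        have h0 : gam T A C B ε p = 0 := by rw [hg]; rfl
        rw [hcomp] at h0
        simp only [heq] at h0
        exact h0
      have hcont : Continuous fun s : ℝ => ∑ q : Fin M, (C * E s * B) p q ^ 2 := by
        simp only [hE]
        exact continuous_finset_sum _ fun q _ => (cont_gEntry T A C B p q).pow 2
      have hnn : ∀ s : ℝ, 0 ≤ ∑ q : Fin M, (C * E s * B) p q ^ 2 := fun s =>
        Finset.sum_nonneg fun q _ => sq_nonneg _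
      exact eqzero_of_integral_zero hcont hnn hT hI
    intro s hs
    ext p q
    have h1 := key p s hs
    have h2 : ∀ q ∈ Finset.univ, (0:ℝ) ≤ (C * E s * B) p q ^ 2 := fun q _ => sq_nonneg _
    have := (Finset.sum_eq_zero_iff_of_nonneg h2).mp h1 q (Finset.mem_univ q)
    simpa using pow_eq_zero_iff (n := 2) (by norm_num) |>.mp this
  -- Step 2: all powers
  have hj : ∀ j : ℕ, ∀ s ∈ Set.Ioo (0:ℝ) T, (C * A ^ j) * E s * B = 0 := by
    intro j
    induction j with
    | zero => simpa using hzero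
    | succ j ih =>
      have := stepLemma A (C * A ^ j) B ih
      intro s hs
      have h2 := this s hs
      simp only [hE]
      rw [pow_succ, ← Matrix.mul_assoc]
      exact h2
  -- Step 3: at s₀ = T/2
  set X : Matrix (Fin N) (Fin M) ℝ := exp ((T/2) • A) * B with hX
  have hs₀ : (T/2) ∈ Set.Ioo (0:ℝ) T := ⟨half_pos hT, half_lt_self hT⟩
  have hXj : ∀ j : ℕ, C * A ^ j * X = 0 := by
    intro j
    have := hj j (T/2) hs₀
    simp only [hE] at this
    rw [hX, ← Matrix.mul_assoc]
    simpa [sub_half] using this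
  -- Step 4: rank ⇒ X = 0
  have hker : LinearMap.ker (obsMat A C).mulVecLin = ⊥ := by
    have h1 := LinearMap.finrank_range_add_finrank_ker ((obsMat A C).mulVecLin)
    rw [Matrix.rank] at hrank
    rw [hrank] at h1
    have h2 : Module.finrank ℝ (Fin N → ℝ) = N := by
      simp [Module.finrank_fintype_fun_eq_card]
    rw [h2] at h1
    have h3 : Module.finrank ℝ (LinearMap.ker (obsMat A C).mulVecLin) = 0 := by omega
    exact Submodule.finrank_eq_zero.mp h3
  have hX0 : X = 0 := by
    ext i m
    have hcol : (obsMat A C).mulVec (fun i => X i m) = 0 := by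
      funext jp
      have := hXj (jp.1 : ℕ)
      calc (obsMat A C).mulVec (fun i => X i m) jp
          = ∑ i, (C * A ^ (jp.1 : ℕ)) jp.2 i * X i m := by
            simp [Matrix.mulVec, dotProduct, obsMat]
        _ = (C * A ^ (jp.1 : ℕ) * X) jp.2 m := by rw [Matrix.mul_apply]
        _ = 0 := by rw [this]; simp
    have : (fun i => X i m) ∈ LinearMap.ker (obsMat A C).mulVecLin := by
      rw [LinearMap.mem_ker, Matrix.mulVecLin_apply, hcol]
    rw [hker, Submodule.mem_bot] at this
    exact congrFun this i
  -- Step 5: invert exp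
  have hinv : exp (-((T/2) • A)) * exp ((T/2) • A) = 1 := by
    rw [← Matrix.exp_add_of_commute _ _ ((Commute.refl ((T/2) • A)).neg_left)]
    simp
  calc B = (exp (-((T/2) • A)) * exp ((T/2) • A)) * B := by rw [hinv, Matrix.one_mul]
    _ = exp (-((T/2) • A)) * X := by rw [Matrix.mul_assoc, ← hX]
    _ = 0 := by rw [hX0, Matrix.mul_zero]


lemma gam_zero_B {ε : ℝ → Fin M → ℝ} : gam T A C (0 : Matrix (Fin N) (Fin M) ℝ) ε = 0 := by
  simp [gam]

lemma gam_add (B₁ B₂ : Matrix (Fin N) (Fin M) ℝ) {ε : ℝ → Fin M → ℝ} (hε : Continuous ε) :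
    gam T A C (B₁ + B₂) ε = gam T A C B₁ ε + gam T A C B₂ ε := by
  unfold gam
  have h1 : IntervalIntegrable (fun s : ℝ => (C * exp ((T - s) • A) * B₁).mulVec (ε s))
      volume 0 T := (cont_integrand T A C B₁ hε).intervalIntegrable 0 T
  have h2 : IntervalIntegrable (fun s : ℝ => (C * exp ((T - s) • A) * B₂).mulVec (ε s))
      volume 0 T := (cont_integrand T A C B₂ hε).intervalIntegrable 0 T
  rw [← intervalIntegral.integral_add h1 h2]
  congr 1; funext s
  rw [Matrix.mul_add, Matrix.add_mulVec]

lemma gam_smul (c : ℝ) (B : Matrix (Fin N) (Fin M) ℝ) {ε : ℝ → Fin M → ℝ} :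
    gam T A C (c • B) ε = c • gam T A C B ε := by
  unfold gam
  rw [← intervalIntegral.integral_smul]
  congr 1; funext s
  rw [Matrix.mul_smul, Matrix.smul_mulVec]

lemma gam_sub (B₁ B₂ : Matrix (Fin N) (Fin M) ℝ) {ε : ℝ → Fin M → ℝ} (hε : Continuous ε) :
    gam T A C (B₁ - B₂) ε = gam T A C B₁ ε - gam T A C B₂ ε := by
  have h := gam_add (T := T) (A := A) (C := C) (B₁ - B₂) B₂ hε
  rw [sub_add_cancel] at h
  rw [h]; abel

lemma gam_finsum {ι : Type*} (s : Finset ι) (F : ι → Matrix (Fin N) (Fin M) ℝ)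
    {ε : ℝ → Fin M → ℝ} (hε : Continuous ε) :
    gam T A C (∑ j ∈ s, F j) ε = ∑ j ∈ s, gam T A C (F j) ε := by
  classical
  induction s using Finset.cons_induction with
  | empty => simpa using gam_zero_B
  | cons a s ha ih =>
    rw [Finset.sum_cons, Finset.sum_cons, gam_add _ _ hε, ih]

lemma gam_sum_smul (Bs : Fin K → Matrix (Fin N) (Fin M) ℝ) (α : Fin K → ℝ)
    {ε : ℝ → Fin M → ℝ} (hε : Continuous ε) :
    gam T A C (∑ j, α j • Bs j) ε = ∑ j, α j • gam T A C (Bs j) ε := by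
  rw [gam_finsum _ _ hε]
  congr 1; funext j; exact gam_smul _ _

lemma exists_good (hT : 0 < T) (hrank : (obsMat A C).rank = N)
    (Bs : Fin K → Matrix (Fin N) (Fin M) ℝ) (hli : LinearIndependent ℝ Bs) :
    ∀ (r : ℕ) (S : Submodule ℝ (Fin K → ℝ)), Module.finrank ℝ S ≤ r →
      ∃ f : Fin r → (ℝ → Fin M → ℝ), (∀ m, Continuous (f m)) ∧
        ∀ α ∈ S, (∀ m, gam T A C (∑ j, α j • Bs j) (f m) = 0) → α = 0 := by
  intro r
  induction r with
  | zero =>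
    intro S hS
    have hbot : S = ⊥ := Submodule.finrank_eq_zero.mp (Nat.le_zero.mp hS)
    exact ⟨Fin.elim0, fun m => m.elim0, fun α hα _ => by simpa [hbot] using hα⟩
  | succ r ih =>
    intro S hS
    by_cases hbot : S = ⊥
    · exact ⟨fun _ => fun _ _ => 0, fun _ => continuous_const,
        fun α hα _ => by simpa [hbot] using hα⟩
    · obtain ⟨α₀, hα₀S, hα₀⟩ := Submodule.ne_bot_iff S |>.mp hbot
      have hB0 : (∑ j, α₀ j • Bs j) ≠ 0 := by
        intro hc
        exact hα₀ (funext fun j => Fintype.linearIndependent_iff.mp hli α₀ hc j)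
      have hex : ¬ ∀ ε : ℝ → Fin M → ℝ, Continuous ε →
          gam T A C (∑ j, α₀ j • Bs j) ε = 0 :=
        fun hall => hB0 (keyInj hT hrank _ hall)
      push_neg at hex
      obtain ⟨ε₀, hε₀c, hε₀⟩ := hex
      set L : (Fin K → ℝ) →ₗ[ℝ] (Fin P → ℝ) :=
        { toFun := fun α => ∑ j, α j • gam T A C (Bs j) ε₀
          map_add' := fun a b => by
            simp [add_smul, Finset.sum_add_distrib]
          map_smul' := fun c a => by
            simp [smul_smul, Finset.smul_sum] } with hL
      have hLspec : ∀ α : Fin K → ℝ, gam T A C (∑ j, α j • Bs j) ε₀ = L α := by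
        intro α; rw [gam_sum_smul Bs α hε₀c]; rfl
      set S' : Submodule ℝ (Fin K → ℝ) := S ⊓ LinearMap.ker L with hS'
      have hlt : S' < S := by
        refine lt_of_le_of_ne inf_le_left (fun he => ?_)
        have : α₀ ∈ S' := he ▸ hα₀S
        have hk : L α₀ = 0 := this.2
        exact hε₀ (by rw [hLspec]; exact hk)
      have hrk : Module.finrank ℝ S' ≤ r := by
        have := Submodule.finrank_lt_finrank_of_lt hlt
        omega
      obtain ⟨f', hf'c, hf'⟩ := ih S' hrk
      refine ⟨Fin.cons ε₀ f', ?_, ?_⟩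
      · intro m
        refine Fin.cases ?_ ?_ m
        · simpa using hε₀c
        · intro i; simpa using hf'c i
      · intro α hα hall
        have h0 : L α = 0 := by
          have := hall 0
          rw [Fin.cons_zero] at this
          rw [← hLspec]; exact this
        refine hf' α ⟨hα, h0⟩ (fun m => ?_)
        have := hall m.succ
        rwa [Fin.cons_succ] at this


lemma cont_memℒp {T : ℝ} (g : ℝ → Fin M → ℝ) (hg : Continuous g) :
    MemLp g 2 (volume.restrict (Set.Ioc (0:ℝ) T)) := by
  haveI : IsFiniteMeasure (volume.restrict (Set.Ioc (0:ℝ) T)) :=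
    ⟨by rw [Measure.restrict_apply_univ]; exact measure_Ioc_lt_top⟩
  obtain ⟨Cb, hCb⟩ := (isCompact_Icc (a := (0:ℝ)) (b := T)).exists_bound_of_continuousOn
    hg.continuousOn
  refine MemLp.of_bound hg.aestronglyMeasurable Cb ?_
  filter_upwards [ae_restrict_mem measurableSet_Ioc] with x hx
  exact hCb x (Set.Ioc_subset_Icc_self hx)

lemma quadform (Bs : Fin K → Matrix (Fin N) (Fin M) ℝ) {ε : ℝ → Fin M → ℝ}
    (hε : Continuous ε) (x : Fin K → ℝ) :
    x ⬝ᵥ (Wmat T A C Bs ε).mulVec x =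
      gam T A C (∑ j, x j • Bs j) ε ⬝ᵥ gam T A C (∑ j, x j • Bs j) ε := by
  rw [gam_sum_smul Bs x hε]
  simp only [Wmat, Matrix.mulVec, dotProduct, Matrix.of_apply, Finset.sum_apply,
    Pi.smul_apply, smul_eq_mul, Finset.sum_mul, Finset.mul_sum]
  have h1 : ∀ (f : Fin K → Fin K → Fin P → ℝ),
      (∑ a, ∑ b, ∑ p, f a b p) = ∑ p, ∑ a, ∑ b, f a b p := by
    intro f
    calc (∑ a, ∑ b, ∑ p, f a b p) = ∑ a, ∑ p, ∑ b, f a b p :=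
          Finset.sum_congr rfl (fun a _ => Finset.sum_comm)
      _ = ∑ p, ∑ a, ∑ b, f a b p := Finset.sum_comm
  rw [h1]
  apply Finset.sum_congr rfl; intro p _
  apply Finset.sum_congr rfl; intro a _
  apply Finset.sum_congr rfl; intro b _
  ring

lemma wsum_herm (Bs : Fin K → Matrix (Fin N) (Fin M) ℝ) (ε : Fin K → ℝ → Fin M → ℝ) :
    (∑ m : Fin K, Wmat T A C Bs (ε m)).IsHermitian := by
  have hm : ∀ m : Fin K, (Wmat T A C Bs (ε m)).IsHermitian := by
    intro m
    unfold Matrix.IsHermitian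
    ext i j
    simp [Wmat, Matrix.conjTranspose_apply, dotProduct_comm]
  unfold Matrix.IsHermitian
  rw [Matrix.conjTranspose_sum]
  exact Finset.sum_congr rfl fun m _ => hm m


lemma dp_self_nonneg (v : Fin P → ℝ) : 0 ≤ v ⬝ᵥ v := by
  rw [dotProduct]
  exact Finset.sum_nonneg fun i _ => mul_self_nonneg _

lemma dot_sum_mulVec {ι : Type*} (s : Finset ι) (x : Fin K → ℝ)
    (g : ι → Matrix (Fin K) (Fin K) ℝ) :
    x ⬝ᵥ (∑ m ∈ s, g m) *ᵥ x = ∑ m ∈ s, x ⬝ᵥ (g m) *ᵥ x := by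
  classical
  induction s using Finset.cons_induction with
  | empty => simp
  | cons a s ha ih =>
    rw [Finset.sum_cons, Finset.sum_cons, Matrix.add_mulVec, dotProduct_add, ih]

lemma CmulVec_phiT_sub (φ₀ : Fin N → ℝ) (B₁ B₂ : Matrix (Fin N) (Fin M) ℝ)
    {ε : ℝ → Fin M → ℝ} (hε : Continuous ε) :
    C.mulVec (phiT T A φ₀ B₁ ε) - C.mulVec (phiT T A φ₀ B₂ ε)
      = gam T A C B₁ ε - gam T A C B₂ ε := by
  have key : ∀ B : Matrix (Fin N) (Fin M) ℝ,
      C.mulVec (phiT T A φ₀ B ε) =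
        C.mulVec ((exp (T • A)).mulVec φ₀) + gam T A C B ε := by
    intro B
    unfold phiT
    rw [Matrix.mulVec_add]
    congr 1
    have hcont : Continuous fun s : ℝ => (exp ((T - s) • A) * B).mulVec (ε s) := by
      have := cont_integrand T A (1 : Matrix (Fin N) (Fin N) ℝ) B hε
      simpa using this
    have hInt : IntervalIntegrable (fun s : ℝ => (exp ((T - s) • A) * B).mulVec (ε s))
        volume 0 T := hcont.intervalIntegrable 0 T
    calc C.mulVec (∫ s in (0:ℝ)..T, (exp ((T - s) • A) * B).mulVec (ε s))
        = (LinearMap.toContinuousLinearMap (Matrix.mulVecLin C))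
            (∫ s in (0:ℝ)..T, (exp ((T - s) • A) * B).mulVec (ε s)) := rfl
      _ = ∫ s in (0:ℝ)..T, (LinearMap.toContinuousLinearMap (Matrix.mulVecLin C))
            ((exp ((T - s) • A) * B).mulVec (ε s)) :=
          (ContinuousLinearMap.intervalIntegral_comp_comm _ hInt).symm
      _ = gam T A C B ε := by
          unfold gam
          congr 1; funext s
          show C.mulVec ((exp ((T - s) • A) * B).mulVec (ε s)) = _
          rw [Matrix.mulVec_mulVec, ← Matrix.mul_assoc]
  rw [key B₁, key B₂, add_sub_add_left_eq_sub]


end aux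

open Module

/-- for a fully observable system and linearly independent `B_1,…,B_K`
(`1 ≤ K ≤ MN`), there exist `L²` controls `ε^1,…,ε^K` making `Ŵ = Σ_m W(ε^m)` positive
definite; consequently, for any `α⋆`, the online least-squares problem is uniquely
minimized at `α = α⋆`. -/
theorem GR_convergence_fully_observable {N M P K : ℕ}
    (hN : 0 < N) (hM : 0 < M) (hP : 0 < P) (hK : 0 < K) (hKMN : K ≤ M * N)
    (T : ℝ) (hT : 0 < T)
    (A : Matrix (Fin N) (Fin N) ℝ) (C : Matrix (Fin P) (Fin N) ℝ)
    (φ₀ : Fin N → ℝ)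
    (hrank : (obsMat A C).rank = N)
    (Bs : Fin K → Matrix (Fin N) (Fin M) ℝ)
    (hli : LinearIndependent ℝ Bs) :
    ∃ ε : Fin K → ℝ → Fin M → ℝ,
      (∀ m, MemLp (ε m) 2 (volume.restrict (Set.Ioc (0:ℝ) T))) ∧
      (∑ m : Fin K, Wmat T A C Bs (ε m)).PosDef ∧
      ∀ αstar α : Fin K → ℝ, α ≠ αstar →
        0 < ∑ m : Fin K,
          (C.mulVec (phiT T A φ₀ (∑ j, αstar j • Bs j) (ε m)) -
              C.mulVec (phiT T A φ₀ (∑ j, α j • Bs j) (ε m))) ⬝ᵥ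
            (C.mulVec (phiT T A φ₀ (∑ j, αstar j • Bs j) (ε m)) -
              C.mulVec (phiT T A φ₀ (∑ j, α j • Bs j) (ε m))) := by
  classical
  obtain ⟨f, hfc, hf⟩ := exists_good hT hrank Bs hli K ⊤ (by
    rw [finrank_top]
    simp [Module.finrank_fintype_fun_eq_card])
  have hf' : ∀ α : Fin K → ℝ, (∀ m, gam T A C (∑ j, α j • Bs j) (f m) = 0) → α = 0 :=
    fun α h => hf α Submodule.mem_top h
  -- generic positivity of the sum of squared norms
  have hposSum : ∀ δ : Fin K → ℝ, δ ≠ 0 →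
      0 < ∑ m : Fin K, gam T A C (∑ j, δ j • Bs j) (f m) ⬝ᵥ
        gam T A C (∑ j, δ j • Bs j) (f m) := by
    intro δ hδ
    have hnz : ∃ m, gam T A C (∑ j, δ j • Bs j) (f m) ≠ 0 := by
      by_contra hall; push_neg at hall; exact hδ (hf' δ hall)
    obtain ⟨m₀, hm₀⟩ := hnz
    refine Finset.sum_pos' (fun m _ => dp_self_nonneg _) ⟨m₀, Finset.mem_univ _, ?_⟩
    exact lt_of_le_of_ne (dp_self_nonneg _)
      (fun h => hm₀ (dotProduct_self_eq_zero.mp h.symm))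
  refine ⟨f, fun m => cont_memℒp _ (hfc m), Matrix.PosDef.of_dotProduct_mulVec_pos (wsum_herm Bs f) ?_, ?_⟩
  · intro x hx
    rw [star_trivial, dot_sum_mulVec]
    have hq : ∀ m : Fin K, x ⬝ᵥ (Wmat T A C Bs (f m)) *ᵥ x =
        gam T A C (∑ j, x j • Bs j) (f m) ⬝ᵥ gam T A C (∑ j, x j • Bs j) (f m) :=
      fun m => quadform Bs (hfc m) x
    simp only [hq]
    exact hposSum x hx
  · intro αstar α hne
    have hδ : (fun j => αstar j - α j) ≠ 0 := by
      intro hc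
      apply hne
      funext j
      have := congrFun hc j
      simp only [Pi.zero_apply] at this
      linarith
    have hdiff : ∀ m : Fin K,
        C.mulVec (phiT T A φ₀ (∑ j, αstar j • Bs j) (f m)) -
          C.mulVec (phiT T A φ₀ (∑ j, α j • Bs j) (f m)) =
          gam T A C (∑ j, (αstar j - α j) • Bs j) (f m) := by
      intro m
      have hBsum : (∑ j, αstar j • Bs j) - (∑ j, α j • Bs j)
          = ∑ j, (αstar j - α j) • Bs j := by
        rw [← Finset.sum_sub_distrib]
        apply Finset.sum_congr rfl
        intro j _
        rw [sub_smul]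
      rw [CmulVec_phiT_sub φ₀ _ _ (hfc m), ← gam_sub _ _ (hfc m), hBsum]
    simp only [hdiff]
    exact hposSum _ hδ
end

section
/- If a vector v ∈ ℝ^N satisfies 𝒪_N(C,A)·v = 0 (equivalently, C·A^j·v = 0 for all j = 0,…,N−1), then C·exp(tA)·v = 0 for every t ∈ ℝ. -/
open Matrix

lemma obs_pow_zero {N P : ℕ}
    (A : Matrix (Fin N) (Fin N) ℝ) (C : Matrix (Fin P) (Fin N) ℝ)
    (v : Fin N → ℝ) (hv : (obsMat A C).mulVec v = 0) :
    ∀ k : ℕ, (C * A ^ k).mulVec v = 0 := by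
  have hbase : ∀ j : Fin N, (C * A ^ (j : ℕ)).mulVec v = 0 := by
    intro j
    funext p
    have := congrFun hv (j, p)
    simpa [obsMat, Matrix.mulVec, dotProduct] using this
  -- Cayley-Hamilton: A^N is a combination of lower powers
  have hCH : A ^ N = -∑ i ∈ Finset.range N, A.charpoly.coeff i • A ^ i := by
    have h0 := A.aeval_self_charpoly
    rw [Polynomial.aeval_eq_sum_range (p := A.charpoly) A] at h0
    rw [A.charpoly_natDegree_eq_dim, Fintype.card_fin, Finset.sum_range_succ] at h0
    have hlead : A.charpoly.coeff N = 1 := by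
      have := A.charpoly_monic
      have hd : A.charpoly.natDegree = N := by
        rw [A.charpoly_natDegree_eq_dim, Fintype.card_fin]
      rw [Polynomial.Monic, Polynomial.leadingCoeff, hd] at this
      exact this
    rw [hlead, one_smul] at h0
    linear_combination (norm := module) h0
  intro k
  induction k using Nat.strong_induction_on with
  | _ k ih =>
    rcases lt_or_ge k N with hk | hk
    · exact hbase ⟨k, hk⟩
    · have hCk : C * A ^ k
          = -∑ i ∈ Finset.range N, A.charpoly.coeff i • (C * A ^ (k - N + i)) := by
        calc C * A ^ k = C * (A ^ (k - N) * A ^ N) := by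
              rw [← pow_add]; congr 2; omega
          _ = _ := by
              rw [hCH]
              simp [Matrix.mul_neg, Matrix.mul_smul, Matrix.mul_sum, Finset.mul_sum,
                mul_assoc, pow_add, mul_smul_comm]
      have hsum : (∑ i ∈ Finset.range N, A.charpoly.coeff i • (C * A ^ (k - N + i))) *ᵥ v
          = ∑ i ∈ Finset.range N, (A.charpoly.coeff i • (C * A ^ (k - N + i))) *ᵥ v :=
        by
          funext p
          simp only [Matrix.mulVec, dotProduct, Matrix.sum_apply, Finset.sum_apply, Finset.sum_mul]
          rw [Finset.sum_comm]
      rw [hCk, Matrix.neg_mulVec, hsum]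
      have hterm : ∀ i ∈ Finset.range N,
          (A.charpoly.coeff i • (C * A ^ (k - N + i))).mulVec v = 0 := by
        intro i hi
        rw [Matrix.smul_mulVec,
          ih (k - N + i) (by have := Finset.mem_range.mp hi; omega), smul_zero]
      rw [Finset.sum_congr rfl hterm]
      simp

/-- if `𝒪_N(C,A) v = 0` (equivalently `C A^j v = 0` for `j = 0,…,N−1`),
then `C e^{tA} v = 0` for every `t ∈ ℝ`. -/
theorem obs_kernel_invisible {N P : ℕ} (hN : 0 < N) (hP : 0 < P)
    (A : Matrix (Fin N) (Fin N) ℝ) (C : Matrix (Fin P) (Fin N) ℝ)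
    (v : Fin N → ℝ) (hv : (obsMat A C).mulVec v = 0) :
    ∀ t : ℝ, (C * NormedSpace.exp (t • A)).mulVec v = 0 := by
  intro t
  have hk := obs_pow_zero A C v hv
  letI : SeminormedRing (Matrix (Fin N) (Fin N) ℝ) := Matrix.linftyOpSemiNormedRing
  letI : NormedRing (Matrix (Fin N) (Fin N) ℝ) := Matrix.linftyOpNormedRing
  letI : NormedAlgebra ℝ (Matrix (Fin N) (Fin N) ℝ) := Matrix.linftyOpNormedAlgebra
  let L₀ : Matrix (Fin N) (Fin N) ℝ →ₗ[ℝ] (Fin P → ℝ) :=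
    { toFun := fun M => (C * M) *ᵥ v
      map_add' := fun M M' => by
        show (C * (M + M')) *ᵥ v = (C * M) *ᵥ v + (C * M') *ᵥ v
        rw [Matrix.mul_add, Matrix.add_mulVec]
      map_smul' := fun c M => by
        show (C * (c • M)) *ᵥ v = c • ((C * M) *ᵥ v)
        rw [Matrix.mul_smul, Matrix.smul_mulVec] }
  let L : Matrix (Fin N) (Fin N) ℝ →L[ℝ] (Fin P → ℝ) := L₀.toContinuousLinearMap
  have hsummable : Summable fun n : ℕ => (Nat.factorial n : ℝ)⁻¹ • (t • A) ^ n :=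
    NormedSpace.expSeries_summable' (𝕂 := ℝ) (t • A)
  have hexp : NormedSpace.exp (t • A) = ∑' n : ℕ, (Nat.factorial n : ℝ)⁻¹ • (t • A) ^ n := by
    rw [NormedSpace.exp_eq_tsum (𝕂 := ℝ)]
  have hmap : L (∑' n : ℕ, (Nat.factorial n : ℝ)⁻¹ • (t • A) ^ n)
      = ∑' n : ℕ, L ((Nat.factorial n : ℝ)⁻¹ • (t • A) ^ n) :=
    L.map_tsum hsummable
  have hterm : ∀ n : ℕ, L ((Nat.factorial n : ℝ)⁻¹ • (t • A) ^ n) = 0 := by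
    intro n
    have : L ((Nat.factorial n : ℝ)⁻¹ • (t • A) ^ n)
        = (Nat.factorial n : ℝ)⁻¹ • (t ^ n • ((C * A ^ n) *ᵥ v)) := by
      rw [_root_.map_smul]
      show ((Nat.factorial n : ℝ)⁻¹ • ((C * (t • A) ^ n) *ᵥ v)) = _
      rw [smul_pow, Matrix.mul_smul, Matrix.smul_mulVec]
    rw [this, hk n, smul_zero, smul_zero]
  have : (C * NormedSpace.exp (t • A)) *ᵥ v = L (NormedSpace.exp (t • A)) := rfl
  rw [this, hexp, hmap]
  simp [hterm]
end

section
/- Let B_1,…,B_K ∈ ℝ^{N×M} and let R < K be such that 𝒪_N(C,A)·B_j = 0 for every j ∈ {R+1,…,K}. Then for every α⋆, α ∈ ℝ^K and all controls ε^1,…,ε^L ∈ L²((0,T);ℝ^M), Σ_{m=1}^L ‖C·φ_T(B(α⋆),ε^m) − C·φ_T(B(α),ε^m)‖₂² = Σ_{m=1}^L ‖Σ_{j=1}^{R} (α⋆_j − α_j)·γ(B_j,ε^m)‖₂²; in particular the least-squares cost depends only on the first R coordinates of α. -/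
open MeasureTheory Matrix

lemma CAB_pow {N M P : ℕ} (A : Matrix (Fin N) (Fin N) ℝ) (C : Matrix (Fin P) (Fin N) ℝ)
    (B : Matrix (Fin N) (Fin M) ℝ) (h : ∀ i : ℕ, i < N → C * A ^ i * B = 0) :
    ∀ n : ℕ, C * A ^ n * B = 0 := by
  have hA : A ^ N = -∑ i ∈ Finset.range N, A.charpoly.coeff i • A ^ i := by
    have h0 : (Polynomial.aeval A) A.charpoly = 0 := A.aeval_self_charpoly
    have hdeg : A.charpoly.natDegree = N := by
      simpa using A.charpoly_natDegree_eq_dim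
    rw [Polynomial.aeval_eq_sum_range, hdeg, Finset.sum_range_succ] at h0
    have hc := A.charpoly_monic.coeff_natDegree
    rw [hdeg] at hc
    rw [hc, one_smul] at h0
    exact eq_neg_of_add_eq_zero_right h0
  intro n
  induction n using Nat.strong_induction_on with
  | _ n ih =>
    rcases Nat.eq_zero_or_pos N with h0 | hNpos
    · subst h0
      ext i j
      simp [Matrix.mul_apply]
    rcases lt_or_ge n N with hn | hn
    · exact h n hn
    · calc C * A ^ n * B = C * (A ^ (n - N) * A ^ N) * B := by
            rw [← pow_add, Nat.sub_add_cancel hn]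
        _ = -∑ i ∈ Finset.range N, A.charpoly.coeff i • (C * A ^ (n - N + i) * B) := by
            rw [hA]
            simp only [Matrix.mul_neg, Matrix.neg_mul, neg_inj, Matrix.mul_sum, Matrix.sum_mul]
            refine Finset.sum_congr rfl fun i hi => ?_
            simp only [Matrix.mul_smul, Matrix.smul_mul, pow_add, mul_assoc]
        _ = 0 := by
            rw [Finset.sum_eq_zero, neg_zero]
            intro i hi
            rw [ih _ (by simp at hi; omega), smul_zero]

lemma C_exp_B_eq_zero {N M P : ℕ} (X : Matrix (Fin N) (Fin N) ℝ)
    (C : Matrix (Fin P) (Fin N) ℝ) (B : Matrix (Fin N) (Fin M) ℝ)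
    (h : ∀ n : ℕ, C * X ^ n * B = 0) :
    C * NormedSpace.exp X * B = 0 := by
  letI : SeminormedRing (Matrix (Fin N) (Fin N) ℝ) := Matrix.linftyOpSemiNormedRing
  letI : NormedRing (Matrix (Fin N) (Fin N) ℝ) := Matrix.linftyOpNormedRing
  letI : NormedAlgebra ℝ (Matrix (Fin N) (Fin N) ℝ) := Matrix.linftyOpNormedAlgebra
  have hsum : Summable (fun n : ℕ => ((Nat.factorial n : ℝ))⁻¹ • X ^ n) :=
    NormedSpace.expSeries_summable' (𝕂 := ℝ) X
  let g : Matrix (Fin N) (Fin N) ℝ →+ Matrix (Fin P) (Fin M) ℝ :=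
    AddMonoidHom.mk' (fun Y => C * Y * B) (fun x y => by
      simp only [Matrix.mul_add, Matrix.add_mul])
  have hg : Continuous g := by
    exact (continuous_const.matrix_mul continuous_id).matrix_mul continuous_const
  have : C * NormedSpace.exp X * B = g (NormedSpace.exp X) := rfl
  rw [this, NormedSpace.exp_eq_tsum ℝ, ← (hsum.hasSum.map g hg).tsum_eq]
  convert tsum_zero with n
  show C * ((Nat.factorial n : ℝ))⁻¹ • X ^ n * B = 0
  rw [Matrix.mul_smul, Matrix.smul_mul, h n, smul_zero]

lemma key_integrable {P' M : ℕ} {T : ℝ} (hT : 0 ≤ T)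
    {F : ℝ → Matrix (Fin P') (Fin M) ℝ} (hF : Continuous F)
    {ε : ℝ → Fin M → ℝ} (hε : MemLp ε 2 (volume.restrict (Set.Ioc (0:ℝ) T))) :
    IntervalIntegrable (fun s => (F s).mulVec (ε s)) volume 0 T := by
  letI : NormedAddCommGroup (Matrix (Fin P') (Fin M) ℝ) := Matrix.normedAddCommGroup
  letI : NormedSpace ℝ (Matrix (Fin P') (Fin M) ℝ) := Matrix.normedSpace
  haveI : IsFiniteMeasure (volume.restrict (Set.Ioc (0:ℝ) T)) := by
    constructor
    rw [Measure.restrict_apply_univ, Real.volume_Ioc]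
    exact ENNReal.ofReal_lt_top
  have hεi : Integrable ε (volume.restrict (Set.Ioc (0:ℝ) T)) :=
    hε.integrable (by norm_num)
  rw [intervalIntegrable_iff_integrableOn_Ioc_of_le hT]
  obtain ⟨Cb, hCb⟩ :=
    (isCompact_Icc (a := (0:ℝ)) (b := T)).exists_bound_of_continuousOn hF.continuousOn
  have hCb0 : 0 ≤ Cb := le_trans (norm_nonneg _) (hCb 0 ⟨le_refl _, hT⟩)
  let L : Matrix (Fin P') (Fin M) ℝ →L[ℝ] (Fin M → ℝ) →L[ℝ] (Fin P' → ℝ) :=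
    LinearMap.toContinuousLinearMap
      { toFun := fun Mt => LinearMap.toContinuousLinearMap Mt.mulVecLin
        map_add' := fun x y => by
          ext v i
          simp [Matrix.add_mulVec]
        map_smul' := fun c x => by
          ext v i
          simp [Matrix.smul_mulVec] }
  have hL : ∀ (Mt : Matrix (Fin P') (Fin M) ℝ) v, L Mt v = Mt.mulVec v := fun Mt v => rfl
  have hmeas : AEStronglyMeasurable (fun s => (F s).mulVec (ε s))
      (volume.restrict (Set.Ioc (0:ℝ) T)) := by
    have hFm : AEStronglyMeasurable (fun s => Matrix.of.symm (F s))
        (volume.restrict (Set.Ioc (0:ℝ) T)) :=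
      (show Continuous fun s => Matrix.of.symm (F s) from hF).aestronglyMeasurable
    have hc : Continuous fun p : (Fin P' → Fin M → ℝ) × (Fin M → ℝ) =>
        (Matrix.of p.1).mulVec p.2 :=
      Continuous.matrix_mulVec (continuous_fst : Continuous fun p : (Fin P' → Fin M → ℝ) × (Fin M → ℝ) => p.1) continuous_snd
    exact hc.comp_aestronglyMeasurable (hFm.prodMk hε.aestronglyMeasurable)
  refine Integrable.mono' ((hεi.norm.const_mul ((M : ℝ) * Cb))) hmeas ?_
  filter_upwards [ae_restrict_mem measurableSet_Ioc] with s hs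
  have hsI : s ∈ Set.Icc (0:ℝ) T := ⟨le_of_lt hs.1, hs.2⟩
  have hb : ∀ i, ‖((F s).mulVec (ε s)) i‖ ≤ (M : ℝ) * Cb * ‖ε s‖ := by
    intro i
    calc ‖((F s).mulVec (ε s)) i‖ = |∑ k, F s i k * ε s k| := by
          simp [Matrix.mulVec, dotProduct, Real.norm_eq_abs]
      _ ≤ ∑ k, |F s i k * ε s k| := Finset.abs_sum_le_sum_abs _ _
      _ ≤ ∑ _k : Fin M, Cb * ‖ε s‖ := by
          refine Finset.sum_le_sum fun k _ => ?_
          rw [abs_mul]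
          refine mul_le_mul ?_ ?_ (abs_nonneg _) hCb0
          · exact le_trans ((F s).norm_entry_le_entrywise_sup_norm) (hCb s hsI)
          · exact (norm_le_pi_norm (ε s) k)
      _ = (M : ℝ) * Cb * ‖ε s‖ := by
          rw [Finset.sum_const, Finset.card_univ, Fintype.card_fin, nsmul_eq_mul, mul_assoc]
  calc ‖(F s).mulVec (ε s)‖ ≤ (M : ℝ) * Cb * ‖ε s‖ :=
        pi_norm_le_iff_of_nonneg (by positivity) |>.2 hb
    _ = (M : ℝ) * Cb * ‖ε s‖ := rfl

lemma gam_eq_zero {N M P : ℕ} {T : ℝ} (A : Matrix (Fin N) (Fin N) ℝ)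
    (C : Matrix (Fin P) (Fin N) ℝ) (B : Matrix (Fin N) (Fin M) ℝ)
    (hOB : obsMat A C * B = 0) (ε : ℝ → Fin M → ℝ) :
    gam T A C B ε = 0 := by
  have hbase : ∀ i : ℕ, i < N → C * A ^ i * B = 0 := by
    intro i hi
    ext p q
    have h2 := congrFun (congrFun hOB (⟨i, hi⟩, p)) q
    simp only [obsMat, Matrix.mul_apply, Matrix.of_apply, Matrix.zero_apply] at h2 ⊢
    simpa using h2
  have hz : ∀ s : ℝ, C * NormedSpace.exp ((T - s) • A) * B = 0 := by
    intro s
    apply C_exp_B_eq_zero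
    intro n
    rw [smul_pow, Matrix.mul_smul, Matrix.smul_mul, CAB_pow A C B hbase n, smul_zero]
  unfold gam
  simp [hz]

/-- if `𝒪_N(C,A) B_j = 0` for all `j > R` (0-indexed: `j ≥ R`), then the
least-squares cost equals `Σ_m ‖Σ_{j<R} (α⋆_j − α_j) γ(B_j,ε^m)‖₂²`, hence depends only
on the first `R` coordinates of `α`. -/
theorem cost_depends_on_observable_coefficients {N M P K L : ℕ}
    (hN : 0 < N) (hM : 0 < M) (hP : 0 < P) (hK : 0 < K) (hL : 0 < L)
    (T : ℝ) (hT : 0 < T)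
    (A : Matrix (Fin N) (Fin N) ℝ) (C : Matrix (Fin P) (Fin N) ℝ)
    (φ₀ : Fin N → ℝ)
    (Bs : Fin K → Matrix (Fin N) (Fin M) ℝ)
    (R : ℕ) (hR : R < K)
    (hker : ∀ j : Fin K, R ≤ (j : ℕ) → obsMat A C * Bs j = 0)
    (αstar α : Fin K → ℝ)
    (ε : Fin L → ℝ → Fin M → ℝ)
    (hε : ∀ m, MemLp (ε m) 2 (volume.restrict (Set.Ioc (0:ℝ) T))) :
    ∑ m : Fin L,
        (C.mulVec (phiT T A φ₀ (∑ j, αstar j • Bs j) (ε m)) -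
            C.mulVec (phiT T A φ₀ (∑ j, α j • Bs j) (ε m))) ⬝ᵥ
          (C.mulVec (phiT T A φ₀ (∑ j, αstar j • Bs j) (ε m)) -
            C.mulVec (phiT T A φ₀ (∑ j, α j • Bs j) (ε m))) =
      ∑ m : Fin L,
        (∑ j ∈ Finset.univ.filter (fun j : Fin K => (j : ℕ) < R),
            (αstar j - α j) • gam T A C (Bs j) (ε m)) ⬝ᵥ
          (∑ j ∈ Finset.univ.filter (fun j : Fin K => (j : ℕ) < R),
            (αstar j - α j) • gam T A C (Bs j) (ε m)) := by
  have hTle : (0:ℝ) ≤ T := hT.le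
  have hEcont : Continuous (fun s : ℝ => NormedSpace.exp ((T - s) • A)) := by
    letI : SeminormedRing (Matrix (Fin N) (Fin N) ℝ) := Matrix.linftyOpSemiNormedRing
    letI : NormedRing (Matrix (Fin N) (Fin N) ℝ) := Matrix.linftyOpNormedRing
    letI : NormedAlgebra ℝ (Matrix (Fin N) (Fin N) ℝ) := Matrix.linftyOpNormedAlgebra
    letI : NormedAlgebra ℚ (Matrix (Fin N) (Fin N) ℝ) :=
      NormedAlgebra.restrictScalars ℚ ℝ (Matrix (Fin N) (Fin N) ℝ)
    exact NormedSpace.exp_continuous.comp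
      ((continuous_const.sub continuous_id).smul continuous_const)
  have key : ∀ m : Fin L,
      C.mulVec (phiT T A φ₀ (∑ j, αstar j • Bs j) (ε m)) -
        C.mulVec (phiT T A φ₀ (∑ j, α j • Bs j) (ε m)) =
      ∑ j ∈ Finset.univ.filter (fun j : Fin K => (j : ℕ) < R),
        (αstar j - α j) • gam T A C (Bs j) (ε m) := by
    intro m
    have hint : ∀ B : Matrix (Fin N) (Fin M) ℝ,
        IntervalIntegrable
          (fun s => (C * NormedSpace.exp ((T - s) • A) * B).mulVec (ε m s)) volume 0 T :=
      fun B => key_integrable hTle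
        ((continuous_const.matrix_mul hEcont).matrix_mul continuous_const) (hε m)
    have hCphi : ∀ c : Fin K → ℝ,
        C.mulVec (phiT T A φ₀ (∑ j, c j • Bs j) (ε m)) =
          C.mulVec ((NormedSpace.exp (T • A)).mulVec φ₀) +
            ∑ j, c j • gam T A C (Bs j) (ε m) := by
      intro c
      unfold phiT
      rw [Matrix.mulVec_add]
      congr 1
      have hint2 : IntervalIntegrable
          (fun s => (NormedSpace.exp ((T - s) • A) * (∑ j, c j • Bs j)).mulVec (ε m s))
          volume 0 T :=
        key_integrable hTle (hEcont.matrix_mul continuous_const) (hε m)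
      let Lc : (Fin N → ℝ) →L[ℝ] (Fin P → ℝ) := LinearMap.toContinuousLinearMap C.mulVecLin
      have hcomm : C.mulVec (∫ s in (0:ℝ)..T,
            (NormedSpace.exp ((T - s) • A) * (∑ j, c j • Bs j)).mulVec (ε m s)) =
          ∫ s in (0:ℝ)..T,
            C.mulVec ((NormedSpace.exp ((T - s) • A) * (∑ j, c j • Bs j)).mulVec (ε m s)) :=
        (ContinuousLinearMap.intervalIntegral_comp_comm Lc hint2).symm
      rw [hcomm]
      have hpt : ∀ s : ℝ,
          C.mulVec ((NormedSpace.exp ((T - s) • A) * (∑ j, c j • Bs j)).mulVec (ε m s)) =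
            ∑ j, c j • (C * NormedSpace.exp ((T - s) • A) * Bs j).mulVec (ε m s) := by
        intro s
        rw [Matrix.mulVec_mulVec]
        have hmm : C * (NormedSpace.exp ((T - s) • A) * ∑ j, c j • Bs j)
            = ∑ j, c j • (C * NormedSpace.exp ((T - s) • A) * Bs j) := by
          rw [← Matrix.mul_assoc, Matrix.mul_sum]
          refine Finset.sum_congr rfl fun j _ => ?_
          rw [Matrix.mul_smul]
        rw [hmm]
        have hsum_mulVec : (∑ j, c j • (C * NormedSpace.exp ((T - s) • A) * Bs j)).mulVec
            (ε m s) = ∑ j, (c j • (C * NormedSpace.exp ((T - s) • A) * Bs j)).mulVec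
            (ε m s) := by
          funext i
          simp only [Matrix.mulVec, dotProduct, Matrix.sum_apply, Matrix.smul_apply,
            smul_eq_mul, Finset.sum_mul, Finset.sum_apply, Pi.smul_apply]
          rw [Finset.sum_comm]
        rw [hsum_mulVec]
        refine Finset.sum_congr rfl fun j _ => ?_
        rw [Matrix.smul_mulVec]
      simp_rw [hpt]
      rw [intervalIntegral.integral_finset_sum
        (f := fun (j : Fin K) s => c j • (C * NormedSpace.exp ((T - s) • A) * Bs j).mulVec
          (ε m s))
        (fun j _ => (hint (Bs j)).smul (c j))]
      refine Finset.sum_congr rfl fun j _ => ?_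
      rw [intervalIntegral.integral_smul]
      rfl
    rw [hCphi αstar, hCphi α, add_sub_add_left_eq_sub, ← Finset.sum_sub_distrib]
    simp_rw [← sub_smul]
    rw [← Finset.sum_filter_add_sum_filter_not Finset.univ (fun j : Fin K => (j:ℕ) < R)]
    have hzero : ∑ j ∈ Finset.univ.filter (fun j : Fin K => ¬ (j:ℕ) < R),
        (αstar j - α j) • gam T A C (Bs j) (ε m) = 0 := by
      refine Finset.sum_eq_zero fun j hj => ?_
      rw [gam_eq_zero A C (Bs j)
        (hker j (not_lt.1 (Finset.mem_filter.1 hj).2)) (ε m), smul_zero]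
    rw [hzero, add_zero]
  exact Finset.sum_congr rfl fun m _ => by rw [key m]
end
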